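/- (Global convergence of the Projected Newton method.) Let A be a real m×n matrix, b ∈ ℝ^m, σ > 0, and define F(x,λ) = (λ·Aᵀ(Ax − b) + x, ½‖Ax − b‖² − ½σ²). Let c ∈ (0,1), τ ∈ (0,1), ζ > 0, and let sequences (x_k, λ_k) ∈ ℝ^n × ℝ, nonzero directions p_{k+1} ∈ ℝ^n × ℝ and step-lengths γ_{k+1} ∈ (0,1] satisfy for all k ≥ 0: (i) the sufficient decrease condition ‖F(x_{k+1}, λ_{k+1})‖² ≤ (1 − 2cγ_{k+1})‖F(x_k, λ_k)‖², and (ii) the step-length lower bound γ_{k+1} ≥ min(1, 2(1 − c)τ‖F(x_k, λ_k)‖² / (ζ‖p_{k+1}‖²)). Then either ‖F(x_k, λ_k)‖ = 0 for some k ≥ 0, or lim_{k→∞} min(‖F(x_k, λ_k)‖, ‖F(x_k, λ_k)‖² / ‖p_{k+1}‖) = 0. -/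

import Mathlib

open Matrix Filter

/-- The Euclidean norm of `F(x,λ) = (λAᵀ(Ax − b) + x, ½‖Ax − b‖² − ½σ²)`. -/
noncomputable def Fnorm {m n : ℕ} (A : Matrix (Fin m) (Fin n) ℝ) (b : Fin m → ℝ)
    (σ : ℝ) (x : Fin n → ℝ) (lam : ℝ) : ℝ :=
  Real.sqrt ((lam • (Aᵀ *ᵥ (A *ᵥ x - b)) + x) ⬝ᵥ (lam • (Aᵀ *ᵥ (A *ᵥ x - b)) + x)
    + ((A *ᵥ x - b) ⬝ᵥ (A *ᵥ x - b) / 2 - σ ^ 2 / 2) ^ 2)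

/-- The Euclidean norm of a direction `p ∈ ℝⁿ × ℝ`. -/
noncomputable def Pnorm {n : ℕ} (p : (Fin n → ℝ) × ℝ) : ℝ :=
  Real.sqrt (p.1 ⬝ᵥ p.1 + p.2 ^ 2)

lemma Pnorm_pos {n : ℕ} {p : (Fin n → ℝ) × ℝ} (hp : p ≠ 0) : 0 < Pnorm p := by
  rw [Pnorm, Real.sqrt_pos]
  have h1 : 0 ≤ p.1 ⬝ᵥ p.1 := Finset.sum_nonneg fun i _ => mul_self_nonneg _
  have h2 : 0 ≤ p.2 ^ 2 := sq_nonneg _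
  rcases lt_or_eq_of_le h1 with h | h
  · linarith
  rcases lt_or_eq_of_le h2 with h' | h'
  · linarith
  exfalso
  apply hp
  have hp1 : p.1 = 0 := (dotProduct_self_eq_zero).mp h.symm
  have hp2 : p.2 = 0 := by
    have := h'.symm
    nlinarith [sq_nonneg p.2]
  exact Prod.ext hp1 hp2

/-- Global convergence of the Projected Newton method: if the iterates satisfy
the sufficient decrease condition (i) and the step-length lower bound (ii),
then either `‖F(x_k,λ_k)‖ = 0` for some `k`, or
`min(‖F(x_k,λ_k)‖, ‖F(x_k,λ_k)‖²/‖p_{k+1}‖) → 0`. -/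
theorem projected_newton_global_convergence {m n : ℕ}
    (A : Matrix (Fin m) (Fin n) ℝ) (b : Fin m → ℝ) (σ : ℝ) (hσ : 0 < σ)
    (c τ ζ : ℝ) (hc : c ∈ Set.Ioo (0 : ℝ) 1) (hτ : τ ∈ Set.Ioo (0 : ℝ) 1) (hζ : 0 < ζ)
    (x : ℕ → Fin n → ℝ) (lam : ℕ → ℝ)
    (p : ℕ → (Fin n → ℝ) × ℝ) (γ : ℕ → ℝ)
    (hp : ∀ k, p (k + 1) ≠ 0)
    (hγ : ∀ k, γ (k + 1) ∈ Set.Ioc (0 : ℝ) 1)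
    (hdec : ∀ k, Fnorm A b σ (x (k + 1)) (lam (k + 1)) ^ 2
      ≤ (1 - 2 * c * γ (k + 1)) * Fnorm A b σ (x k) (lam k) ^ 2)
    (hlb : ∀ k, min 1 (2 * (1 - c) * τ * Fnorm A b σ (x k) (lam k) ^ 2
        / (ζ * Pnorm (p (k + 1)) ^ 2)) ≤ γ (k + 1)) :
    (∃ k, Fnorm A b σ (x k) (lam k) = 0)
    ∨ Tendsto (fun k => min (Fnorm A b σ (x k) (lam k))
        (Fnorm A b σ (x k) (lam k) ^ 2 / Pnorm (p (k + 1)))) atTop (nhds 0) := by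
  by_cases hz : ∃ k, Fnorm A b σ (x k) (lam k) = 0
  · exact Or.inl hz
  right
  push_neg at hz
  set F : ℕ → ℝ := fun k => Fnorm A b σ (x k) (lam k) with hF
  have hFnn : ∀ k, 0 ≤ F k := fun k => Real.sqrt_nonneg _
  set f : ℕ → ℝ := fun k => F k ^ 2 with hf
  have hfnn : ∀ k, 0 ≤ f k := fun k => sq_nonneg _
  have hγpos : ∀ k, 0 < γ (k + 1) := fun k => (hγ k).1
  have hcpos : 0 < c := hc.1
  have hstep : ∀ k, 2 * c * γ (k + 1) * f k ≤ f k - f (k + 1) := by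
    intro k
    have h' : f (k + 1) ≤ (1 - 2 * c * γ (k + 1)) * f k := hdec k
    nlinarith [h']
  have hanti : Antitone f := by
    apply antitone_nat_of_succ_le
    intro k
    have h1 := hstep k
    have h2 : 0 ≤ 2 * c * γ (k + 1) * f k :=
      mul_nonneg (mul_nonneg (by linarith) (hγpos k).le) (hfnn k)
    linarith
  -- f converges
  have hbdd : BddBelow (Set.range f) := ⟨0, fun y ⟨k, hk⟩ => hk ▸ hfnn k⟩
  have hL : Tendsto f atTop (nhds (⨅ k, f k)) := tendsto_atTop_ciInf hanti hbdd
  have hL' : Tendsto (fun k => f (k + 1)) atTop (nhds (⨅ k, f k)) :=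
    hL.comp (tendsto_add_atTop_nat 1)
  have hdiff : Tendsto (fun k => f k - f (k + 1)) atTop (nhds 0) := by
    have := hL.sub hL'
    simpa using this
  -- γ f → 0
  have hγf : Tendsto (fun k => γ (k + 1) * f k) atTop (nhds 0) := by
    have hup : Tendsto (fun k => (f k - f (k + 1)) / (2 * c)) atTop (nhds 0) := by
      simpa using hdiff.div_const (2 * c)
    apply tendsto_of_tendsto_of_tendsto_of_le_of_le tendsto_const_nhds hup
    · intro k
      exact mul_nonneg (hγpos k).le (hfnn k)
    · intro k
      show γ (k + 1) * f k ≤ (f k - f (k + 1)) / (2 * c)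
      rw [le_div_iff₀ (by linarith)]
      nlinarith [hstep k]
  set P : ℕ → ℝ := fun k => Pnorm (p (k + 1)) with hP
  have hPpos : ∀ k, 0 < P k := fun k => Pnorm_pos (hp k)
  set C : ℝ := 2 * (1 - c) * τ / ζ with hC
  have hCpos : 0 < C := by
    have := hc.2; have := hτ.1
    apply div_pos (by nlinarith) hζ
  set g : ℕ → ℝ := fun k => min (f k) (C * f k ^ 2 / P k ^ 2) with hg
  have hgnn : ∀ k, 0 ≤ g k := by
    intro k
    exact le_min (hfnn k)
      (div_nonneg (mul_nonneg hCpos.le (sq_nonneg _)) (sq_nonneg _))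
  have hgle : ∀ k, g k ≤ γ (k + 1) * f k := by
    intro k
    have h1 := hlb k
    have h2 : min 1 (2 * (1 - c) * τ * F k ^ 2 / (ζ * P k ^ 2)) * f k ≤ γ (k + 1) * f k :=
      mul_le_mul_of_nonneg_right h1 (hfnn k)
    refine le_trans ?_ h2
    rw [min_mul_of_nonneg _ _ (hfnn k), one_mul]
    apply min_le_min le_rfl
    apply le_of_eq
    simp only [hf, hC]
    ring
  have hgto : Tendsto g atTop (nhds 0) :=
    tendsto_of_tendsto_of_tendsto_of_le_of_le tendsto_const_nhds hγf hgnn hgle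
  -- conclude
  set M : ℝ := max 1 C⁻¹ with hM
  have hM1 : (1 : ℝ) ≤ M := le_max_left _ _
  have hMC : (1 : ℝ) ≤ M * C := by
    calc (1 : ℝ) = C⁻¹ * C := (inv_mul_cancel₀ hCpos.ne').symm
    _ ≤ M * C := mul_le_mul_of_nonneg_right (le_max_right _ _) hCpos.le
  have hMg : Tendsto (fun k => Real.sqrt (M * g k)) atTop (nhds 0) := by
    have : Tendsto (fun k => M * g k) atTop (nhds (M * 0)) := hgto.const_mul M
    rw [mul_zero] at this
    simpa [Real.sqrt_zero] using this.sqrt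
  apply tendsto_of_tendsto_of_tendsto_of_le_of_le tendsto_const_nhds hMg
  · intro k
    exact le_min (hFnn k) (div_nonneg (sq_nonneg _) (hPpos k).le)
  · intro k
    set h : ℝ := min (F k) (F k ^ 2 / P k) with hh
    have hhnn : 0 ≤ h := le_min (hFnn k) (div_nonneg (sq_nonneg _) (hPpos k).le)
    rw [show (fun k => min (Fnorm A b σ (x k) (lam k))
        (Fnorm A b σ (x k) (lam k) ^ 2 / Pnorm (p (k + 1)))) k = h from rfl]
    rw [Real.le_sqrt hhnn]
    have hsq : h ^ 2 ≤ min (f k) (f k ^ 2 / P k ^ 2) := by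
      apply le_min
      · have : h ≤ F k := min_le_left _ _
        simp only [hf]
        nlinarith
      · have h1 : h ≤ F k ^ 2 / P k := min_le_right _ _
        have h2 : (F k ^ 2 / P k) ^ 2 = f k ^ 2 / P k ^ 2 := by
          simp only [hf]; ring
        nlinarith
    refine hsq.trans ?_
    have : min (f k) (f k ^ 2 / P k ^ 2) ≤ min (M * f k) (M * (C * f k ^ 2 / P k ^ 2)) := by
      apply min_le_min
      · nlinarith [hfnn k]
      · have h3 : 0 ≤ f k ^ 2 / P k ^ 2 := by positivity
        have : M * (C * f k ^ 2 / P k ^ 2) = (M * C) * (f k ^ 2 / P k ^ 2) := by ring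
        rw [this]
        nlinarith
    refine this.trans ?_
    rw [hg, mul_min_of_nonneg _ _ (by linarith : (0:ℝ) ≤ M)]
    · exact mul_nonneg (by linarith : (0:ℝ) ≤ M) (hgnn k)
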